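/- For λ, θ, m, p > 0, n ≥ 1, and a natural number q with q/p < mn, the q-th moment of the minimum of n i.i.d. generalized Burr XII variables equals mn (λ/θ)^{q/p} B(q/p + 1, mn − q/p), where B is the Beta function. -/

import Mathlib

open MeasureTheory Real Set

lemma real_beta {a b : ℝ} (ha : 0 < a) (hb : 0 < b) :
    ∫ t in Ioo (0:ℝ) 1, t ^ (a - 1) * (1 - t) ^ (b - 1)
      = Real.Gamma a * Real.Gamma b / Real.Gamma (a + b) := by
  have hC : Complex.Gamma a * Complex.Gamma b
      = Complex.Gamma (a + b) * Complex.betaIntegral a b :=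
    Complex.Gamma_mul_Gamma_eq_betaIntegral (by simpa using ha) (by simpa using hb)
  have hbeta : Complex.betaIntegral a b
      = ((∫ t in (0:ℝ)..1, t ^ (a - 1) * (1 - t) ^ (b - 1) : ℝ) : ℂ) := by
    rw [Complex.betaIntegral, ← intervalIntegral.integral_ofReal]
    refine intervalIntegral.integral_congr fun x hx => ?_
    rw [uIcc_of_le zero_le_one] at hx
    rw [Complex.ofReal_mul, Complex.ofReal_cpow hx.1,
      Complex.ofReal_cpow (by linarith [hx.2] : (0:ℝ) ≤ 1 - x)]
    push_cast
    ring
  have hGab : Real.Gamma (a + b) ≠ 0 := (Real.Gamma_pos_of_pos (by linarith)).ne'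
  have key : Real.Gamma a * Real.Gamma b
      = Real.Gamma (a + b) * ∫ t in (0:ℝ)..1, t ^ (a - 1) * (1 - t) ^ (b - 1) := by
    have := hC
    rw [hbeta, show ((a:ℂ) + (b:ℂ)) = ((a + b : ℝ) : ℂ) by push_cast; ring,
      Complex.Gamma_ofReal, Complex.Gamma_ofReal, Complex.Gamma_ofReal] at this
    exact_mod_cast this
  rw [intervalIntegral.integral_of_le zero_le_one, integral_Ioc_eq_integral_Ioo] at key
  rw [eq_div_iff hGab]
  linarith [key]

set_option maxHeartbeats 1000000 in
/-- The q-th moment of the minimum of n i.i.d. generalized Burr XII variables: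
∫₀^∞ x^q λ^{mn} mn θ p x^{p−1}/(λ+θx^p)^{mn+1} dx = mn (λ/θ)^{q/p} B(q/p+1, mn−q/p),
where B(a,b) = Γ(a)Γ(b)/Γ(a+b). -/
theorem genBurrXII_min_moment (lam θ m p : ℝ) (hlam : 0 < lam) (hθ : 0 < θ)
    (hm : 0 < m) (hp : 0 < p) (n : ℕ) (hn : 1 ≤ n)
    (q : ℕ) (hq : (q : ℝ) / p < m * n) :
    (∫ x in Ioi (0:ℝ), x ^ (q : ℝ) *
        (lam ^ (m * n) * (m * n) * θ * p * x ^ (p - 1) / (lam + θ * x ^ p) ^ (m * n + 1)))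
      = m * n * (lam / θ) ^ ((q : ℝ) / p) *
        (Real.Gamma ((q : ℝ) / p + 1) * Real.Gamma (m * n - (q : ℝ) / p)
          / Real.Gamma (((q : ℝ) / p + 1) + (m * n - (q : ℝ) / p))) := by
  set a : ℝ := (q : ℝ) / p with ha_def
  have ha0 : 0 ≤ a := div_nonneg (Nat.cast_nonneg q) hp.le
  set C : ℝ := m * n * (lam / θ) ^ a with hC_def
  set f : ℝ → ℝ := fun x => θ * x ^ p / (lam + θ * x ^ p) with hf_def
  set f' : ℝ → ℝ := fun x => lam * θ * p * x ^ (p - 1) / (lam + θ * x ^ p) ^ 2 with hf'_def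
  set g : ℝ → ℝ := fun t => C * (t ^ a * (1 - t) ^ (m * n - a - 1)) with hg_def
  have hD : ∀ x : ℝ, 0 < x → 0 < lam + θ * x ^ p := fun x hx => by
    have := rpow_pos_of_pos hx p
    positivity
  -- derivative
  have hderiv : ∀ x ∈ Ioi (0:ℝ), HasDerivWithinAt f (f' x) (Ioi 0) x := by
    intro x hx
    have hx : (0:ℝ) < x := hx
    have h1 : HasDerivAt (fun x : ℝ => θ * x ^ p) (θ * (p * x ^ (p - 1))) x :=
      (Real.hasDerivAt_rpow_const (Or.inl hx.ne')).const_mul θ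
    have h2 : HasDerivAt (fun x : ℝ => lam + θ * x ^ p) (θ * (p * x ^ (p - 1))) x := by
      simpa using (h1.const_add lam)
    have heq : lam * θ * p * x ^ (p - 1) =
        θ * (p * x ^ (p - 1)) * (lam + θ * x ^ p) - θ * x ^ p * (θ * (p * x ^ (p - 1))) := by
      ring
    have : HasDerivAt f (f' x) x := by
      simp only [hf_def, hf'_def]
      rw [heq]
      exact h1.div h2 (hD x hx).ne'
    exact this.hasDerivWithinAt
  -- injectivity
  have hmono : StrictMonoOn f (Ioi (0:ℝ)) := by
    intro x hx y hy hxy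
    have hx : (0:ℝ) < x := hx
    have hy : (0:ℝ) < y := hy
    have hXY : x ^ p < y ^ p := Real.rpow_lt_rpow hx.le hxy hp
    simp only [hf_def]
    rw [div_lt_div_iff₀ (hD x hx) (hD y hy)]
    nlinarith [mul_lt_mul_of_pos_left hXY (mul_pos hθ hlam)]
  -- image
  have himg : f '' Ioi (0:ℝ) = Ioo (0:ℝ) 1 := by
    ext t
    constructor
    · rintro ⟨x, hx, rfl⟩
      have hx : (0:ℝ) < x := hx
      have hX : 0 < x ^ p := rpow_pos_of_pos hx p
      refine ⟨div_pos (by positivity) (hD x hx), ?_⟩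
      simp only [hf_def]
      rw [div_lt_one (hD x hx)]
      linarith
    · rintro ⟨ht0, ht1⟩
      have h1t : 0 < 1 - t := by linarith
      set B : ℝ := lam * t / (θ * (1 - t)) with hB_def
      have hB : 0 < B := by positivity
      refine ⟨B ^ (1 / p), rpow_pos_of_pos hB _, ?_⟩
      have hBp : (B ^ (1 / p)) ^ p = B := by
        rw [← Real.rpow_mul hB.le, one_div_mul_cancel hp.ne', Real.rpow_one]
      have hden : lam + θ * B ≠ 0 := by positivity
      simp only [hf_def]
      rw [hBp, div_eq_iff hden, hB_def]
      field_simp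
      ring
  have key := integral_image_eq_integral_abs_deriv_smul measurableSet_Ioi hderiv hmono.injOn g
  rw [himg] at key
  -- pointwise identity
  have hpt : ∀ x ∈ Ioi (0:ℝ), x ^ (q : ℝ) *
      (lam ^ (m * n) * (m * n) * θ * p * x ^ (p - 1) / (lam + θ * x ^ p) ^ (m * n + 1))
      = |f' x| • g (f x) := by
    intro x hx
    have hx : (0:ℝ) < x := hx
    have hX : 0 < x ^ p := rpow_pos_of_pos hx p
    have hX1 : 0 < x ^ (p - 1) := rpow_pos_of_pos hx (p - 1)
    have hD0 : 0 < lam + θ * x ^ p := hD x hx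
    have hf'pos : 0 < f' x := by
      simp only [hf'_def]
      positivity
    rw [abs_of_pos hf'pos, smul_eq_mul]
    simp only [hf'_def, hg_def, hf_def, hC_def]
    have h1t : 1 - θ * x ^ p / (lam + θ * x ^ p) = lam / (lam + θ * x ^ p) := by
      field_simp
      ring
    rw [h1t, div_rpow (by positivity) hD0.le, div_rpow hlam.le hD0.le,
      mul_rpow hθ.le hX.le, div_rpow hlam.le hθ.le]
    have hXa : (x ^ p) ^ a = x ^ (q : ℝ) := by
      rw [← Real.rpow_mul hx.le]
      congr 1
      rw [ha_def]
      field_simp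
    rw [hXa]
    have hlamsplit : lam ^ (m * ↑n) = lam ^ a * (lam ^ (m * ↑n - a - 1) * lam) := by
      rw [← Real.rpow_add_one hlam.ne', ← Real.rpow_add hlam]
      congr 1
      ring
    have hDsplit : (lam + θ * x ^ p) ^ (m * ↑n + 1)
        = (lam + θ * x ^ p) ^ a * ((lam + θ * x ^ p) ^ (m * ↑n - a - 1)
            * (lam + θ * x ^ p) ^ (2:ℕ)) := by
      rw [← Real.rpow_natCast (lam + θ * x ^ p) 2, ← Real.rpow_add hD0, ← Real.rpow_add hD0]
      congr 1
      push_cast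
      ring
    rw [hlamsplit, hDsplit]
    generalize hg1 : lam ^ a = La
    generalize hg2 : lam ^ (m * ↑n - a - 1) = Lb
    generalize hg3 : θ ^ a = Ta
    generalize hg4 : (lam + θ * x ^ p) ^ a = Da
    generalize hg5 : (lam + θ * x ^ p) ^ (m * ↑n - a - 1) = Db
    have hDa : Da ≠ 0 := by rw [← hg4]; exact (rpow_pos_of_pos hD0 _).ne'
    have hDb : Db ≠ 0 := by rw [← hg5]; exact (rpow_pos_of_pos hD0 _).ne'
    have hTa : Ta ≠ 0 := by rw [← hg3]; exact (rpow_pos_of_pos hθ _).ne'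
    field_simp
  have step : (∫ x in Ioi (0:ℝ), x ^ (q : ℝ) *
      (lam ^ (m * n) * (m * n) * θ * p * x ^ (p - 1) / (lam + θ * x ^ p) ^ (m * n + 1)))
      = ∫ x in Ioi (0:ℝ), |f' x| • g (f x) :=
    setIntegral_congr_fun measurableSet_Ioi hpt
  rw [step, ← key]
  have hIoo : (∫ t in Ioo (0:ℝ) 1, g t)
      = C * ∫ t in Ioo (0:ℝ) 1, t ^ (a + 1 - 1) * (1 - t) ^ (m * ↑n - a - 1) := by
    rw [← integral_const_mul]
    refine setIntegral_congr_fun measurableSet_Ioo fun t ht => ?_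
    simp only [hg_def]
    rw [show a + 1 - 1 = a by ring]
  rw [hIoo, real_beta (by linarith) (by linarith), hC_def]
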